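/- Let e₁, e₂, e₂', e₃' be integers with e₂ > e₁ ≥ 0 and e₂' ≥ e₃' ≥ 0. Define σ, σ' : SL(2,k) → SL(4,k) by σ(A) = A^{(p^{e₂})} ⊗ A^{(p^{e₁})} (Kronecker product) and σ'(A) = diag(A^{(p^{e₂'})}, A^{(p^{e₃'})}) (block-diagonal). Then σ and σ' are not equivalent: there exists no P ∈ GL(4,k) such that P⁻¹·σ(A)·P = σ'(A) for all A ∈ SL(2,k). -/
import Mathlib


open Matrix

/-- Entrywise `m`-th power of a 2×2 matrix: `A^{(m)} = [[a^m, b^m],[c^m, d^m]]`. -/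
noncomputable def entryPow {k : Type*} [Field k] (A : Matrix (Fin 2) (Fin 2) k) (m : ℕ) :
    Matrix (Fin 2) (Fin 2) k :=
  Matrix.of fun i j => A i j ^ m

/-- The Kronecker product of two 2×2 matrices as a 4×4 matrix in 2×2 blocks. -/
noncomputable def kron4 {k : Type*} [Field k] (X Y : Matrix (Fin 2) (Fin 2) k) :
    Matrix (Fin 4) (Fin 4) k :=
  !![X 0 0 * Y 0 0, X 0 0 * Y 0 1, X 0 1 * Y 0 0, X 0 1 * Y 0 1;
     X 0 0 * Y 1 0, X 0 0 * Y 1 1, X 0 1 * Y 1 0, X 0 1 * Y 1 1;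
     X 1 0 * Y 0 0, X 1 0 * Y 0 1, X 1 1 * Y 0 0, X 1 1 * Y 0 1;
     X 1 0 * Y 1 0, X 1 0 * Y 1 1, X 1 1 * Y 1 0, X 1 1 * Y 1 1]

/-- The block-diagonal 4×4 matrix `diag(X, Y)` built from two 2×2 matrices. -/
noncomputable def blockDiag4 {k : Type*} [Field k] (X Y : Matrix (Fin 2) (Fin 2) k) :
    Matrix (Fin 4) (Fin 4) k :=
  !![X 0 0, X 0 1, 0, 0;
     X 1 0, X 1 1, 0, 0;
     0, 0, Y 0 0, Y 0 1;
     0, 0, Y 1 0, Y 1 1]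

lemma conj_trace_eq {k : Type*} [Field k] (P : GL (Fin 4) k) (M N : Matrix (Fin 4) (Fin 4) k)
    (heq : ((P⁻¹ : GL (Fin 4) k) : Matrix (Fin 4) (Fin 4) k) * M * (P : Matrix (Fin 4) (Fin 4) k) = N) :
    M.trace = N.trace := by
  have hPP : (P : Matrix (Fin 4) (Fin 4) k) * ((P⁻¹ : GL (Fin 4) k) : Matrix (Fin 4) (Fin 4) k) = 1 := by
    exact Units.mul_inv P
  calc M.trace = ((P : Matrix (Fin 4) (Fin 4) k) * ((P⁻¹ : GL (Fin 4) k) : Matrix (Fin 4) (Fin 4) k) * M).trace := by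
        rw [hPP, one_mul]
    _ = (((P⁻¹ : GL (Fin 4) k) : Matrix (Fin 4) (Fin 4) k) * M * (P : Matrix (Fin 4) (Fin 4) k)).trace :=
        (Matrix.trace_mul_cycle _ _ _).symm
    _ = N.trace := by rw [heq]

lemma trace_kron4 {k : Type*} [Field k] (X Y : Matrix (Fin 2) (Fin 2) k) :
    (kron4 X Y).trace = X 0 0 * Y 0 0 + X 0 0 * Y 1 1 + X 1 1 * Y 0 0 + X 1 1 * Y 1 1 := by
  simp [kron4, Matrix.trace, Matrix.diag, Fin.sum_univ_four]

lemma trace_blockDiag4 {k : Type*} [Field k] (X Y : Matrix (Fin 2) (Fin 2) k) :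
    (blockDiag4 X Y).trace = X 0 0 + X 1 1 + Y 0 0 + Y 1 1 := by
  simp [blockDiag4, Matrix.trace, Matrix.diag, Fin.sum_univ_four]

/-- The Kronecker-product homomorphism
`σ(A) = A^{(p^{e₂})} ⊗ A^{(p^{e₁})}` (with `e₂ > e₁ ≥ 0`) is never equivalent to a
block-diagonal homomorphism `σ'(A) = diag(A^{(p^{e₂'})}, A^{(p^{e₃'})})`
(with `e₂' ≥ e₃' ≥ 0`). -/
theorem stmt16 {k : Type*} [Field k] [IsAlgClosed k] {p : ℕ} [Fact p.Prime] [CharP k p]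
    (e₁ e₂ e₂' e₃' : ℕ) (h : e₁ < e₂) (h' : e₃' ≤ e₂') :
    ¬∃ P : GL (Fin 4) k, ∀ A : SpecialLinearGroup (Fin 2) k,
      ((P⁻¹ : GL (Fin 4) k) : Matrix (Fin 4) (Fin 4) k) *
          kron4 (entryPow A.1 (p ^ e₂)) (entryPow A.1 (p ^ e₁)) *
          (P : Matrix (Fin 4) (Fin 4) k) =
        blockDiag4 (entryPow A.1 (p ^ e₂')) (entryPow A.1 (p ^ e₃')) := by
  have hp : p.Prime := Fact.out
  rintro ⟨P, hP⟩
  by_cases hp2 : p = 2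
  · -- characteristic 2: use a primitive cube root of unity
    subst hp2
    have h2 : (2 : k) = 0 := by exact_mod_cast CharP.cast_eq_zero k 2
    obtain ⟨ω, hω⟩ := IsAlgClosed.exists_root (Polynomial.X ^ 2 + Polynomial.X + 1 : Polynomial k) (by
      have hd : (Polynomial.X ^ 2 + Polynomial.X + 1 : Polynomial k).degree = 2 := by
        compute_degree!
      rw [hd]; norm_num)
    have hω : ω ^ 2 + ω + 1 = 0 := by
      simpa [Polynomial.IsRoot] using hω
    have hω3 : ω ^ 3 = 1 := by linear_combination (ω - 1) * hω
    set A : SpecialLinearGroup (Fin 2) k := ⟨!![ω, 0; 0, ω ^ 2], by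
      simp [Matrix.det_fin_two_of]
      linear_combination (ω - 1) * hω⟩ with hA
    have hpar : ∀ e : ℕ, ω ^ (2 ^ e) = ω ∨ ω ^ (2 ^ e) = ω ^ 2 := by
      intro e
      induction e with
      | zero => left; simp
      | succ n ih =>
        rw [pow_succ, pow_mul]
        rcases ih with hh | hh
        · right; rw [hh]
        · left; rw [hh]; linear_combination ω * hω3
    have hsum : ∀ e : ℕ, ω ^ (2 ^ e) + (ω ^ (2 ^ e)) ^ 2 = 1 := by
      intro e
      rcases hpar e with hh | hh <;> rw [hh]
      · linear_combination hω - h2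
      · linear_combination hω + ω * hω3 - h2
    have htr := conj_trace_eq P _ _ (hP A)
    rw [trace_kron4, trace_blockDiag4] at htr
    simp only [hA, entryPow, Matrix.of_apply] at htr
    simp only [Matrix.cons_val_zero, Matrix.cons_val_one, Matrix.head_cons,
      Matrix.head_fin_const] at htr
    -- htr : ω^q₂ * ω^q₁ + ω^q₂ * (ω^2)^q₁ + (ω^2)^q₂ * ω^q₁ + (ω^2)^q₂ * (ω^2)^q₁
    --      = ω^q₂' + (ω^2)^q₂' + ω^q₃' + (ω^2)^q₃'
    have hsq : ∀ q : ℕ, (ω ^ 2) ^ q = (ω ^ q) ^ 2 := by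
      intro q; rw [← pow_mul, mul_comm, pow_mul]
    rw [hsq, hsq, hsq, hsq] at htr
    have h1 := hsum e₁
    have h2' := hsum e₂
    have h3 := hsum e₂'
    have h4 := hsum e₃'
    have : (1 : k) = 0 := by
      linear_combination htr - (ω ^ 2 ^ e₂ + (ω ^ 2 ^ e₂) ^ 2) * h1 - h2' + h3 + h4 + h2
    exact one_ne_zero this
  · -- odd characteristic: use A = -1
    have hodd : Odd p := hp.odd_of_ne_two hp2
    set A : SpecialLinearGroup (Fin 2) k := ⟨!![(-1 : k), 0; 0, -1], by
      simp [Matrix.det_fin_two_of]⟩ with hA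
    have htr := conj_trace_eq P _ _ (hP A)
    rw [trace_kron4, trace_blockDiag4] at htr
    simp only [hA, entryPow, Matrix.of_apply] at htr
    simp only [Matrix.cons_val_zero, Matrix.cons_val_one, Matrix.head_cons,
      Matrix.head_fin_const] at htr
    have hneg : ∀ e : ℕ, (-1 : k) ^ (p ^ e) = -1 := fun e => (hodd.pow).neg_one_pow
    rw [hneg, hneg, hneg, hneg] at htr
    -- htr : (-1)*(-1) * 4 = -4 style
    have h8 : (8 : k) = 0 := by linear_combination htr
    have : (p : ℕ) ∣ 8 := by
      have := (CharP.cast_eq_zero_iff k p 8).mp (by exact_mod_cast h8)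
      exact this
    have : p = 2 := by
      have h8' : (8 : ℕ) = 2 ^ 3 := by norm_num
      rw [h8'] at this
      exact (Nat.prime_dvd_prime_iff_eq hp Nat.prime_two).mp (hp.dvd_of_dvd_pow this)
    exact hp2 this
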